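/- arXiv:1910.13031 — 2 statements merged into one kernel-verified Lean document; each statement's English description precedes it below -/
import Mathlib

section
/- (Theorem 1, part 1, nondegeneracy.) Let V be a subspace of the Euclidean space ℝ^{4n} such that 𝕀·V ⊆ V^⊥, 𝕁·V ⊆ V^⊥, 𝕀·V^⊥ ⊆ V, and 𝕁·V^⊥ ⊆ V. Then the restriction of the symplectic form ω_𝕂 to V is nondegenerate: for every nonzero u ∈ V there exists w ∈ V with ω_𝕂(u, w) ≠ 0 (indeed w = −𝕂u ∈ V works, since ω_𝕂(u, −𝕂u) = ⟨u, u⟩ > 0). -/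
open Matrix

/-- The standard 2n×2n symplectic matrix `J = [[0, I],[−I, 0]]`. -/
def Jstd (n : ℕ) : Matrix (Fin n ⊕ Fin n) (Fin n ⊕ Fin n) ℝ :=
  Matrix.fromBlocks 0 1 (-1) 0

/-- The 4n×4n matrix `𝕀 = [[0, −I_{2n}],[I_{2n}, 0]]`. -/
def bbI (n : ℕ) :
    Matrix ((Fin n ⊕ Fin n) ⊕ (Fin n ⊕ Fin n)) ((Fin n ⊕ Fin n) ⊕ (Fin n ⊕ Fin n)) ℝ :=
  Matrix.fromBlocks 0 (-1) 1 0

/-- The 4n×4n matrix `𝕁 = [[J, 0],[0, Jᵀ]]`. -/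
def bbJ (n : ℕ) :
    Matrix ((Fin n ⊕ Fin n) ⊕ (Fin n ⊕ Fin n)) ((Fin n ⊕ Fin n) ⊕ (Fin n ⊕ Fin n)) ℝ :=
  Matrix.fromBlocks (Jstd n) 0 0 (Jstd n)ᵀ

/-- The 4n×4n matrix `𝕂 = [[0, J],[J, 0]]`. -/
def bbK (n : ℕ) :
    Matrix ((Fin n ⊕ Fin n) ⊕ (Fin n ⊕ Fin n)) ((Fin n ⊕ Fin n) ⊕ (Fin n ⊕ Fin n)) ℝ :=
  Matrix.fromBlocks 0 (Jstd n) (Jstd n) 0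
lemma hIJ_aux (n : ℕ) : bbI n * bbJ n = bbK n := by
  simp [bbI, bbJ, bbK, Jstd, Matrix.fromBlocks_multiply, Matrix.fromBlocks_transpose,
    Matrix.transpose_neg, Matrix.fromBlocks_neg]

lemma hKK_aux (n : ℕ) : bbK n * bbK n = -1 := by
  simp [bbK, Jstd, Matrix.fromBlocks_multiply, ← Matrix.fromBlocks_one, Matrix.fromBlocks_neg]

lemma toEuclideanLin_mul_apply_aux {m : Type*} [Fintype m] [DecidableEq m]
    (A B : Matrix m m ℝ) (v : EuclideanSpace ℝ m) :
    Matrix.toEuclideanLin (A * B) v = Matrix.toEuclideanLin A (Matrix.toEuclideanLin B v) := by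
  simp [Matrix.toEuclideanLin_apply, Matrix.mulVec_mulVec]

open RealInnerProductSpace in
/-- Theorem 1, part 1, nondegeneracy: under the same hypotheses,
the restriction of `ω_𝕂(u,v) = ⟨u, 𝕂 v⟩` to `V` is nondegenerate. -/
theorem omega_K_nondegenerate_on_V (n : ℕ) (hn : 1 ≤ n)
    (V : Submodule ℝ (EuclideanSpace ℝ ((Fin n ⊕ Fin n) ⊕ (Fin n ⊕ Fin n))))
    (hI : V.map (Matrix.toEuclideanLin (bbI n)) ≤ Vᗮ)
    (hJ : V.map (Matrix.toEuclideanLin (bbJ n)) ≤ Vᗮ)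
    (hI' : Vᗮ.map (Matrix.toEuclideanLin (bbI n)) ≤ V)
    (hJ' : Vᗮ.map (Matrix.toEuclideanLin (bbJ n)) ≤ V) :
    ∀ u ∈ V, u ≠ 0 → ∃ w ∈ V, ⟪u, Matrix.toEuclideanLin (bbK n) w⟫ ≠ 0 := by
  intro u hu hu0
  refine ⟨Matrix.toEuclideanLin (bbK n) u, ?_, ?_⟩
  · have h1 : Matrix.toEuclideanLin (bbJ n) u ∈ Vᗮ :=
      hJ ⟨u, hu, rfl⟩
    have h2 : Matrix.toEuclideanLin (bbI n) (Matrix.toEuclideanLin (bbJ n) u) ∈ V :=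
      hI' ⟨_, h1, rfl⟩
    rwa [← toEuclideanLin_mul_apply_aux, hIJ_aux] at h2
  · rw [← toEuclideanLin_mul_apply_aux, hKK_aux]
    have : Matrix.toEuclideanLin (-1 : Matrix _ _ ℝ) u = -u := by
      simp [Matrix.toEuclideanLin_apply]
    rw [this, inner_neg_right, neg_ne_zero]
    exact inner_self_ne_zero.mpr hu0
end

section
/- (Lemma 2.) Let S be a symmetric 2n×2n real matrix and let R be a Hamiltonian 2n×2n real matrix (RᵀJ + JR = 0). Then the 4n×4n block matrix A = [[R, S],[−J S J, −Rᵀ]] is Hamiltonian for both ω_𝕀 and ω_𝕁, i.e., Aᵀ𝕀 + 𝕀A = 0 and Aᵀ𝕁 + 𝕁A = 0. -/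
open Matrix

lemma Jstd_transpose (n : ℕ) : (Jstd n)ᵀ = -Jstd n := by
  simp [Jstd, Matrix.fromBlocks_transpose, Matrix.fromBlocks_neg]

lemma Jstd_sq (n : ℕ) : Jstd n * Jstd n = -1 := by
  simp [Jstd, Matrix.fromBlocks_multiply]
  rw [← Matrix.fromBlocks_one, Matrix.fromBlocks_neg]
  simp


/-- Lemma 2: for `S` symmetric and `R` Hamiltonian, the block matrix
`A = [[R, S],[−JSJ, −Rᵀ]]` is Hamiltonian for both `ω_𝕀` and `ω_𝕁`. -/
theorem block_matrix_doubly_hamiltonian (n : ℕ) (hn : 1 ≤ n)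
    (S R : Matrix (Fin n ⊕ Fin n) (Fin n ⊕ Fin n) ℝ)
    (hS : Sᵀ = S) (hR : Rᵀ * Jstd n + Jstd n * R = 0) :
    (Matrix.fromBlocks R S (-(Jstd n * S * Jstd n)) (-Rᵀ))ᵀ * bbI n
        + bbI n * Matrix.fromBlocks R S (-(Jstd n * S * Jstd n)) (-Rᵀ) = 0 ∧
    (Matrix.fromBlocks R S (-(Jstd n * S * Jstd n)) (-Rᵀ))ᵀ * bbJ n
        + bbJ n * Matrix.fromBlocks R S (-(Jstd n * S * Jstd n)) (-Rᵀ) = 0 := by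
  have hJ : (Jstd n)ᵀ = -Jstd n := Jstd_transpose n
  have hJJ : Jstd n * Jstd n = -1 := Jstd_sq n
  have hRJ' : R * Jstd n = -(Jstd n * Rᵀ) := by
    have := congrArg (fun M => Jstd n * M * Jstd n) hR
    simp only [Matrix.mul_zero, Matrix.zero_mul, add_mul, mul_add, Matrix.mul_assoc,
      ← Matrix.mul_assoc (Jstd n) (Jstd n), hJJ, neg_one_mul, mul_neg, mul_one,
      Matrix.neg_mul, Matrix.mul_neg] at this
    linear_combination (norm := noncomm_ring) -this
  constructor
  · rw [bbI, Matrix.fromBlocks_transpose, Matrix.fromBlocks_multiply,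
      Matrix.fromBlocks_multiply, Matrix.fromBlocks_add]
    conv_rhs => rw [← Matrix.fromBlocks_zero]
    rw [Matrix.fromBlocks_inj]
    refine ⟨?_, ?_, ?_, ?_⟩
    all_goals simp [Matrix.transpose_mul, hJ, hS, Matrix.mul_assoc]
  · rw [bbJ, Matrix.fromBlocks_transpose, Matrix.fromBlocks_multiply,
      Matrix.fromBlocks_multiply, Matrix.fromBlocks_add]
    conv_rhs => rw [← Matrix.fromBlocks_zero]
    rw [Matrix.fromBlocks_inj]
    refine ⟨?_, ?_, ?_, ?_⟩
    · simpa using hR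
    · simp [hJ, hS, Matrix.mul_assoc, hJJ]
    · simp [Matrix.transpose_mul, hJ, hS, Matrix.mul_assoc, hJJ]
      rw [← Matrix.mul_assoc (Jstd n) (Jstd n) (S * Jstd n), hJJ]
      simp
    · simp [hJ]
      linear_combination (norm := noncomm_ring) hRJ'
end
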